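/- Let q be real with 0 < q < 1/2, p = 1 − q, and γ ∈ [0,1]. With the Ethereum parameter values n₁ = 6, K₁ = 7/8 and π = 1/32, the long-term apparent hashrate of the Ethereum selfish miner under the old difficulty adjustment formula strictly exceeds that of the Bitcoin selfish miner: q̃_{E,0} > q̃_B, where q̃_B = ( [(p − q)(1 + pq) + pq]·q − (p − q)p²q(1 − γ) )/( pq² + p − q ) and q̃_{E,0} = q̃_B + q̃_u·K₁ + q̃_n·π with q̃_u = p²q(1 − γ)(p − q)/( p − q + p²q ) and q̃_n = (p − q)·( q²(1 + p) − q^{n₁+1} − ( p + (1 − γ)p²q )·pq²·(1 − (pq)^{n₁−1})/(1 − pq) )/( p − q + p²q ). -/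
import Mathlib


set_option maxHeartbeats 1000000 in
/-- With the Ethereum parameter values `n₁ = 6`, `K₁ = 7/8`, `π = 1/32`, the long-term
apparent hashrate of the Ethereum selfish miner with the old difficulty adjustment
formula strictly exceeds that of the Bitcoin selfish miner: `q̃_{E,0} > q̃_B`. -/
theorem ethereum_beats_bitcoin (q p γ : ℝ) (hq0 : 0 < q) (hq : q < 1 / 2)
    (hp : p = 1 - q) (hγ0 : 0 ≤ γ) (hγ1 : γ ≤ 1)
    (qB qu qn qE : ℝ)
    (hqB : qB = (((p - q) * (1 + p * q) + p * q) * q - (p - q) * p ^ 2 * q * (1 - γ)) /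
      (p * q ^ 2 + p - q))
    (hqu : qu = p ^ 2 * q * (1 - γ) * (p - q) / (p - q + p ^ 2 * q))
    (hqn : qn = (p - q) *
        (q ^ 2 * (1 + p) - q ^ (6 + 1) -
          (p + (1 - γ) * p ^ 2 * q) * (p * q ^ 2) * (1 - (p * q) ^ (6 - 1)) /
            (1 - p * q)) /
      (p - q + p ^ 2 * q))
    (hqE : qE = qB + qu * (7 / 8) + qn * (1 / 32)) :
    qE > qB := by
  subst hp
  have hq2 : q ≤ 1 / 2 := hq.le
  have hq0' : (0:ℝ) ≤ q := hq0.le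
  have hpq : (0:ℝ) < 1 - q - q := by linarith
  have hq1 : q < 1 := by linarith
  have hD : (0:ℝ) < (1 - q) - q + (1 - q) ^ 2 * q := by nlinarith
  have ha0 : (0:ℝ) ≤ 1 - γ := by linarith
  have h1pq : (0:ℝ) < 1 - (1 - q) * q := by nlinarith
  -- power bounds
  have c3 : q ^ 3 ≤ q ^ 2 * (1/2) := by
    calc q ^ 3 = q ^ 2 * q := by ring
    _ ≤ q ^ 2 * (1/2) := by gcongr
  have c5 : q ^ 5 ≤ q ^ 4 * (1/2) := by
    calc q ^ 5 = q ^ 4 * q := by ring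
    _ ≤ q ^ 4 * (1/2) := by gcongr
  have c8 : q ^ 8 ≤ q ^ 4 * (1/16) := by
    calc q ^ 8 = q ^ 4 * q ^ 4 := by ring
    _ ≤ q ^ 4 * (1/2) ^ 4 := by gcongr
    _ = q ^ 4 * (1/16) := by norm_num
  have c10 : q ^ 10 ≤ q ^ 8 * (1/4) := by
    calc q ^ 10 = q ^ 8 * q ^ 2 := by ring
    _ ≤ q ^ 8 * (1/2) ^ 2 := by gcongr
    _ = q ^ 8 * (1/4) := by norm_num
  have c11 : q ^ 11 ≤ q ^ 8 * (1/8) := by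
    calc q ^ 11 = q ^ 8 * q ^ 3 := by ring
    _ ≤ q ^ 8 * (1/2) ^ 3 := by gcongr
    _ = q ^ 8 * (1/8) := by norm_num
  have c13 : q ^ 13 ≤ q ^ 8 * (1/32) := by
    calc q ^ 13 = q ^ 8 * q ^ 5 := by ring
    _ ≤ q ^ 8 * (1/2) ^ 5 := by gcongr
    _ = q ^ 8 * (1/32) := by norm_num
  have c15 : q ^ 15 ≤ q ^ 8 * (1/128) := by
    calc q ^ 15 = q ^ 8 * q ^ 7 := by ring
    _ ≤ q ^ 8 * (1/2) ^ 7 := by gcongr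
    _ = q ^ 8 * (1/128) := by norm_num
  -- the γ = 0 (worst case) polynomial inequality
  have hkey : (q ^ 2 * (1 + (1 - q)) - q ^ 7) * (1 - (1 - q) * q) -
      ((1 - q) + (1 - q) ^ 2 * q) * ((1 - q) * q ^ 2) * (1 - ((1 - q) * q) ^ 5) =
      q ^ 2 - 2*q ^ 3 + 5*q ^ 4 - 4*q ^ 5 + q ^ 6 - 5*q ^ 8 + 12*q ^ 9 - 7*q ^ 10
        - 21*q ^ 11 + 49*q ^ 12 - 49*q ^ 13 + 27*q ^ 14 - 8*q ^ 15 + q ^ 16 := by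
    ring
  have hG : ((1 - q) + (1 - q) ^ 2 * q) * ((1 - q) * q ^ 2) * (1 - ((1 - q) * q) ^ 5)
      < (q ^ 2 * (1 + (1 - q)) - q ^ 7) * (1 - (1 - q) * q) := by
    have p2 : 0 < q ^ 2 := pow_pos hq0 2
    have p4 : 0 < q ^ 4 := pow_pos hq0 4
    have p6 : 0 ≤ q ^ 6 := by positivity
    have p9 : 0 ≤ q ^ 9 := by positivity
    have p12 : 0 ≤ q ^ 12 := by positivity
    have p14 : 0 ≤ q ^ 14 := by positivity
    have p16 : 0 ≤ q ^ 16 := by positivity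
    linarith [hkey, c3, c5, c8, c10, c11, c13, c15]
  -- monotonicity in γ
  have hT0 : (0:ℝ) ≤ 1 - ((1 - q) * q) ^ 5 := by
    have hx : (0:ℝ) ≤ (1 - q) * q := mul_nonneg (by linarith) hq0'
    have hx1 : (1 - q) * q ≤ 1 := by nlinarith
    nlinarith [pow_le_one₀ hx hx1 (n := 5)]
  have hTnn : (0:ℝ) ≤ (1 - q) ^ 2 * q * ((1 - q) * q ^ 2) * (1 - ((1 - q) * q) ^ 5) := by
    apply mul_nonneg _ hT0
    apply mul_nonneg (mul_nonneg (by positivity) hq0')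
    apply mul_nonneg (by linarith) (by positivity)
  have hmono : (1 - γ) * ((1 - q) ^ 2 * q) * ((1 - q) * q ^ 2) * (1 - ((1 - q) * q) ^ 5)
      ≤ (1 - q) ^ 2 * q * ((1 - q) * q ^ 2) * (1 - ((1 - q) * q) ^ 5) := by
    have h := mul_nonneg hγ0 hTnn
    have heq : (1 - q) ^ 2 * q * ((1 - q) * q ^ 2) * (1 - ((1 - q) * q) ^ 5) -
        (1 - γ) * ((1 - q) ^ 2 * q) * ((1 - q) * q ^ 2) * (1 - ((1 - q) * q) ^ 5) =
        γ * ((1 - q) ^ 2 * q * ((1 - q) * q ^ 2) * (1 - ((1 - q) * q) ^ 5)) := by ring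
    linarith
  -- qu ≥ 0
  have hqu0 : 0 ≤ qu := by
    rw [hqu]
    apply div_nonneg _ (by linarith [hD])
    exact mul_nonneg (mul_nonneg (mul_nonneg (by positivity) hq0') ha0) hpq.le
  -- M > 0
  have hM : 0 < q ^ 2 * (1 + (1 - q)) - q ^ (6 + 1) -
      ((1 - q) + (1 - γ) * (1 - q) ^ 2 * q) * ((1 - q) * q ^ 2) *
        (1 - ((1 - q) * q) ^ (6 - 1)) / (1 - (1 - q) * q) := by
    rw [sub_pos, div_lt_iff₀ h1pq]
    norm_num only
    linarith [hmono, hG]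
  have hqn0 : 0 < qn := by
    rw [hqn]
    exact div_pos (mul_pos hpq hM) hD
  have : 0 ≤ qu * (7/8) := by linarith
  linarith
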